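/- For a positive odd integer k, the function Z(X) = X^2(1 + e^{−πX}) / ((k^2 + X^2)(1 − e^{−πX})) is strictly monotonically increasing on (0, ∞). -/

import Mathlib

open Real Set

lemma aux_cosh (t : ℝ) (ht : 0 ≤ t) : 1 + t ^ 2 / 2 ≤ Real.cosh t := by
  have h2 : Real.cosh t = 1 + 2 * Real.sinh (t / 2) ^ 2 := by
    have := Real.cosh_two_mul (t / 2)
    rw [Real.cosh_sq] at this
    have h : 2 * (t / 2) = t := by ring
    rw [h] at this
    linarith
  have hs : t / 2 ≤ Real.sinh (t / 2) := by
    rcases eq_or_lt_of_le ht with h | h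
    · simp [← h]
    · exact (Real.self_lt_sinh_iff.2 (by linarith)).le
  nlinarith [hs, ht]

lemma aux_sinh (t : ℝ) (ht : 0 ≤ t) : t + t ^ 3 / 6 ≤ Real.sinh t := by
  set g : ℝ → ℝ := fun s => Real.sinh s - s - s ^ 3 / 6 with hg
  have hg' : ∀ s : ℝ, HasDerivAt g (Real.cosh s - 1 - s ^ 2 / 2) s := by
    intro s
    have h := ((Real.hasDerivAt_sinh s).sub (hasDerivAt_id s)).sub
      ((hasDerivAt_pow 3 s).div_const 6)
    refine h.congr_deriv ?_
    push_cast
    ring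
  have mono : MonotoneOn g (Ici 0) := by
    apply monotoneOn_of_deriv_nonneg (convex_Ici 0)
    · exact (Real.continuous_sinh.sub (continuous_id.add (continuous_pow 3 |>.div_const 6))).continuousOn.congr
        (by intro s _; simp [hg]; ring)
    · intro s _
      exact (hg' s).differentiableAt.differentiableWithinAt
    · intro s hs
      rw [interior_Ici] at hs
      rw [(hg' s).deriv]
      have := aux_cosh s (le_of_lt hs)
      linarith
  have h0 : g 0 ≤ g t := mono (self_mem_Ici) ht ht
  have : g 0 = 0 := by simp [hg]
  rw [this] at h0
  simp only [hg] at h0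
  linarith

lemma aux_exp (t : ℝ) (ht : 0 ≤ t) : 2 * t + t ^ 3 / 3 ≤ Real.exp t - Real.exp (-t) := by
  have h := aux_sinh t ht
  rw [Real.sinh_eq] at h
  linarith

theorem stmt3 (k : ℕ) (hk : 0 < k) (hodd : Odd k)
    (Z : ℝ → ℝ)
    (hZ : ∀ X : ℝ, 0 < X →
      Z X = X ^ 2 * (1 + Real.exp (-(Real.pi * X))) /
        (((k : ℝ) ^ 2 + X ^ 2) * (1 - Real.exp (-(Real.pi * X))))) :
    StrictMonoOn Z (Set.Ioi 0) := by
  have hπ := Real.pi_pos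
  have hπ3 := Real.pi_gt_three
  have hk' : (0 : ℝ) < (k : ℝ) := by exact_mod_cast hk
  have hk1 : (1 : ℝ) ≤ (k : ℝ) ^ 2 := by
    have : (1 : ℝ) ≤ (k : ℝ) := by exact_mod_cast hk
    nlinarith
  set W : ℝ → ℝ := fun x => x ^ 2 * (1 + Real.exp (-(Real.pi * x))) /
      (((k : ℝ) ^ 2 + x ^ 2) * (1 - Real.exp (-(Real.pi * x)))) with hWdef
  have hDpos : ∀ x : ℝ, 0 < x → 0 < ((k : ℝ) ^ 2 + x ^ 2) * (1 - Real.exp (-(Real.pi * x))) := by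
    intro x hx
    have hE1 : Real.exp (-(Real.pi * x)) < 1 := by
      rw [Real.exp_lt_one_iff]
      nlinarith
    have : (0 : ℝ) < (k : ℝ) ^ 2 + x ^ 2 := by positivity
    nlinarith
  have hWmono : StrictMonoOn W (Ioi 0) := by
    apply strictMonoOn_of_deriv_pos (convex_Ioi 0)
    · apply ContinuousOn.div
      · fun_prop
      · fun_prop
      · intro x hx
        exact ne_of_gt (hDpos x hx)
    · rw [interior_Ioi]
      intro x hx
      have hx0 : (0 : ℝ) < x := hx
      set E : ℝ := Real.exp (-(Real.pi * x)) with hEdef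
      have hEpos : 0 < E := Real.exp_pos _
      have hD0 : ((k : ℝ) ^ 2 + x ^ 2) * (1 - E) ≠ 0 := ne_of_gt (hDpos x hx0)
      have hE : HasDerivAt (fun y : ℝ => Real.exp (-(Real.pi * y))) (E * -Real.pi) x := by
        have h1 : HasDerivAt (fun y : ℝ => -(Real.pi * y)) (-Real.pi) x := by
          exact (((hasDerivAt_id x).const_mul Real.pi).neg).congr_deriv (by simp)
        exact h1.exp
      have hN : HasDerivAt (fun y : ℝ => y ^ 2 * (1 + Real.exp (-(Real.pi * y))))
          (2 * x * (1 + E) - Real.pi * x ^ 2 * E) x := by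
        have h := (hasDerivAt_pow 2 x).mul ((hasDerivAt_const x (1 : ℝ)).add hE)
        refine h.congr_deriv ?_
        push_cast [Pi.add_apply, Pi.sub_apply, ← hEdef]
        ring
      have hD : HasDerivAt (fun y : ℝ => ((k : ℝ) ^ 2 + y ^ 2) * (1 - Real.exp (-(Real.pi * y))))
          (2 * x * (1 - E) + Real.pi * ((k : ℝ) ^ 2 + x ^ 2) * E) x := by
        have h := ((hasDerivAt_const x ((k : ℝ) ^ 2)).add (hasDerivAt_pow 2 x)).mul
          ((hasDerivAt_const x (1 : ℝ)).sub hE)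
        refine h.congr_deriv ?_
        push_cast [Pi.add_apply, Pi.sub_apply, ← hEdef]
        ring
      have hW : HasDerivAt W
          (((2 * x * (1 + E) - Real.pi * x ^ 2 * E) * (((k : ℝ) ^ 2 + x ^ 2) * (1 - E)) -
            (x ^ 2 * (1 + E)) * (2 * x * (1 - E) + Real.pi * ((k : ℝ) ^ 2 + x ^ 2) * E)) /
            (((k : ℝ) ^ 2 + x ^ 2) * (1 - E)) ^ 2) x := hN.div hD hD0
      rw [hW.deriv]
      apply div_pos
      · -- numerator positive
        have key : Real.pi * x * ((k : ℝ) ^ 2 + x ^ 2) * E < (k : ℝ) ^ 2 * (1 - E ^ 2) := by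
          set t : ℝ := Real.pi * x with htdef
          have ht0 : 0 < t := by positivity
          have h1 := aux_exp t ht0.le
          have hEt : E = Real.exp (-t) := by rw [hEdef, htdef]
          have h2 : (2 * t + t ^ 3 / 3) * E ≤ 1 - E ^ 2 := by
            have hm := mul_le_mul_of_nonneg_right h1 hEpos.le
            have he1 : Real.exp t * E = 1 := by
              rw [hEt, ← Real.exp_add]; simp
            have he2 : Real.exp (-t) * E = E ^ 2 := by rw [hEt]; ring
            nlinarith [hm]
          have h3 : t * ((k : ℝ) ^ 2 + x ^ 2) < (k : ℝ) ^ 2 * (2 * t + t ^ 3 / 3) := by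
            have ht : t = Real.pi * x := htdef
            have hx3 : (0 : ℝ) < x ^ 3 := by positivity
            have h9 : (9 : ℝ) < Real.pi ^ 2 := by nlinarith
            have hpx3 : (0 : ℝ) < Real.pi * x ^ 3 := mul_pos hπ hx3
            have hC : Real.pi * x ^ 3 < Real.pi ^ 3 * x ^ 3 / 3 := by nlinarith [mul_pos hpx3 hpx3]
            have hD2 : Real.pi ^ 3 * x ^ 3 / 3 ≤ (k : ℝ) ^ 2 * (Real.pi ^ 3 * x ^ 3 / 3) := by
              nlinarith [mul_nonneg (sub_nonneg.2 hk1) (le_of_lt (by positivity : (0:ℝ) < Real.pi ^ 3 * x ^ 3 / 3))]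
            have hE2 : Real.pi * x ≤ (k : ℝ) ^ 2 * (Real.pi * x) := by
              nlinarith [mul_nonneg (sub_nonneg.2 hk1) (le_of_lt (mul_pos hπ hx0))]
            have hpx : (0 : ℝ) < Real.pi * x := mul_pos hπ hx0
            rw [ht]
            nlinarith [hC, hD2, hE2, hpx]
          calc Real.pi * x * ((k : ℝ) ^ 2 + x ^ 2) * E = t * ((k : ℝ) ^ 2 + x ^ 2) * E := by
                rw [htdef]
            _ < (k : ℝ) ^ 2 * (2 * t + t ^ 3 / 3) * E := by
                exact mul_lt_mul_of_pos_right h3 hEpos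
            _ = (k : ℝ) ^ 2 * ((2 * t + t ^ 3 / 3) * E) := by ring
            _ ≤ (k : ℝ) ^ 2 * (1 - E ^ 2) := by
                apply mul_le_mul_of_nonneg_left h2 (by positivity)
        have hexpand : (2 * x * (1 + E) - Real.pi * x ^ 2 * E) * (((k : ℝ) ^ 2 + x ^ 2) * (1 - E)) -
            (x ^ 2 * (1 + E)) * (2 * x * (1 - E) + Real.pi * ((k : ℝ) ^ 2 + x ^ 2) * E) =
            2 * x * ((k : ℝ) ^ 2 * (1 - E ^ 2) - Real.pi * x * ((k : ℝ) ^ 2 + x ^ 2) * E) := by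
          ring
        rw [hexpand]
        apply mul_pos (by linarith)
        linarith
      · exact pow_pos (hDpos x hx0) 2
  intro a ha b hb hab
  rw [hZ a ha, hZ b hb]
  exact hWmono ha hb hab
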